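/- Let ν be a finite Borel measure on ℝ^n all of whose moments s_α = ∫ x^α dν exist. For t ≥ 0 define e^{⊙tν} := Σ_{k∈ℕ₀} (t^k/k!)·ν^{⊙k}, where ν^{⊙0} = δ_𝟙 and ν^{⊙k} is the k-fold multiplicative convolution. Then e^{⊙tν} is a finite Borel measure with moments ∫ x^α d(e^{⊙tν})(x) = e^{t·s_α} for all α ∈ ℕ₀^n. -/

import Mathlib

open MeasureTheory

/-- Multiplicative convolution of measures on ℝ^n. -/
noncomputable def mconv {n : ℕ} (μ ν : Measure (Fin n → ℝ)) : Measure (Fin n → ℝ) :=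
  (μ.prod ν).map (fun p => fun i => p.1 i * p.2 i)

/-- `k`-fold multiplicative convolution power, with `ν^{⊙0} = δ_𝟙`. -/
noncomputable def mconvPow {n : ℕ} (ν : Measure (Fin n → ℝ)) : ℕ → Measure (Fin n → ℝ)
  | 0 => Measure.dirac (fun _ => (1 : ℝ))
  | k + 1 => mconv ν (mconvPow ν k)

/-- The multiplicative exponential `e^{⊙tν} = Σ_k (t^k/k!)·ν^{⊙k}`. -/
noncomputable def mexp {n : ℕ} (t : ℝ) (ν : Measure (Fin n → ℝ)) : Measure (Fin n → ℝ) :=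
  Measure.sum (fun k : ℕ => ENNReal.ofReal (t ^ k / (Nat.factorial k)) • mconvPow ν k)

section aux

variable {n : ℕ}

lemma measurable_monom (α : Fin n → ℕ) :
    Measurable (fun x : Fin n → ℝ => ∏ i, x i ^ α i) :=
  Finset.measurable_prod _ fun i _ => (measurable_pi_apply i).pow_const _

lemma measurable_mulmap :
    Measurable (fun p : (Fin n → ℝ) × (Fin n → ℝ) => fun i => p.1 i * p.2 i) :=
  measurable_pi_lambda _ fun i =>
    ((measurable_pi_apply i).comp measurable_fst).mul
      ((measurable_pi_apply i).comp measurable_snd)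

lemma monom_mul (α : Fin n → ℕ) (a b : Fin n → ℝ) :
    ∏ i, (a i * b i) ^ α i = (∏ i, a i ^ α i) * ∏ i, b i ^ α i := by
  simp [mul_pow, Finset.prod_mul_distrib]

lemma mconvPow_finite (ν : Measure (Fin n → ℝ)) [IsFiniteMeasure ν] (k : ℕ) :
    IsFiniteMeasure (mconvPow ν k) := by
  induction k with
  | zero => rw [mconvPow]; infer_instance
  | succ k ih =>
    letI := ih
    rw [mconvPow, mconv]
    infer_instance

lemma lintegral_nnf_mconvPow (ν : Measure (Fin n → ℝ)) [IsFiniteMeasure ν]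
    (α : Fin n → ℕ) (k : ℕ) :
    ∫⁻ x, ‖∏ i, x i ^ α i‖₊ ∂(mconvPow ν k)
      = (∫⁻ x, ‖∏ i, x i ^ α i‖₊ ∂ν) ^ k := by
  induction k with
  | zero => simp [mconvPow, lintegral_dirac]
  | succ k ih =>
    letI := mconvPow_finite ν k
    have hmeas : Measurable fun x : Fin n → ℝ => (‖∏ i, x i ^ α i‖₊ : ENNReal) :=
      (measurable_monom α).nnnorm.coe_nnreal_ennreal
    rw [mconvPow, mconv, lintegral_map hmeas measurable_mulmap]
    simp only [monom_mul, nnnorm_mul, ENNReal.coe_mul]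
    rw [lintegral_prod_mul hmeas.aemeasurable hmeas.aemeasurable, ih, pow_succ']

lemma integral_monom_mconvPow (ν : Measure (Fin n → ℝ)) [IsFiniteMeasure ν]
    (α : Fin n → ℕ) (k : ℕ) :
    ∫ x, ∏ i, x i ^ α i ∂(mconvPow ν k) = (∫ x, ∏ i, x i ^ α i ∂ν) ^ k := by
  induction k with
  | zero => simp [mconvPow, integral_dirac]
  | succ k ih =>
    letI := mconvPow_finite ν k
    rw [mconvPow, mconv, integral_map measurable_mulmap.aemeasurable
      (measurable_monom α).aestronglyMeasurable]
    simp only [monom_mul]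
    rw [integral_prod_mul (fun x : Fin n → ℝ => ∏ i, x i ^ α i)
      (fun x : Fin n → ℝ => ∏ i, x i ^ α i), ih, pow_succ']

end aux

theorem mexp_moments {n : ℕ} (ν : Measure (Fin n → ℝ)) [IsFiniteMeasure ν]
    (s : (Fin n → ℕ) → ℝ)
    (hint : ∀ α : Fin n → ℕ, Integrable (fun x => ∏ i, x i ^ α i) ν)
    (hs : ∀ α : Fin n → ℕ, s α = ∫ x, ∏ i, x i ^ α i ∂ν)
    (t : ℝ) (htpos : 0 ≤ t) :
    IsFiniteMeasure (mexp t ν) ∧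
    ∀ α : Fin n → ℕ, ∫ x, ∏ i, x i ^ α i ∂(mexp t ν) = Real.exp (t * s α) := by
  have key : ∀ α : Fin n → ℕ, ∫⁻ x, ‖∏ i, x i ^ α i‖₊ ∂(mexp t ν) < ⊤ := by
    intro α
    have hL : (∫⁻ x, ‖∏ i, x i ^ α i‖₊ ∂ν) ≠ ⊤ := (hint α).hasFiniteIntegral.ne
    set L := (∫⁻ x, (‖∏ i, x i ^ α i‖₊ : ENNReal) ∂ν) with hLdef
    rw [mexp, lintegral_sum_measure]
    simp_rw [lintegral_smul_measure, lintegral_nnf_mconvPow, ← hLdef]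
    have hterm : ∀ k : ℕ, ENNReal.ofReal (t ^ k / (Nat.factorial k)) * L ^ k
        = ENNReal.ofReal ((t * L.toReal) ^ k / (Nat.factorial k)) := by
      intro k
      conv_lhs => rw [← ENNReal.ofReal_toReal hL]
      rw [← ENNReal.ofReal_pow ENNReal.toReal_nonneg,
        ← ENNReal.ofReal_mul (by positivity)]
      congr 1; ring
    simp only [smul_eq_mul]
    rw [tsum_congr hterm,
      ← ENNReal.ofReal_tsum_of_nonneg (fun k => by positivity)
        (Real.summable_pow_div_factorial _)]
    exact ENNReal.ofReal_lt_top
  have hfin : IsFiniteMeasure (mexp t ν) := by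
    constructor
    have := key (fun _ => 0)
    simpa using this
  refine ⟨hfin, fun α => ?_⟩
  have hintm : Integrable (fun x => ∏ i, x i ^ α i) (mexp t ν) :=
    ⟨(measurable_monom α).aestronglyMeasurable, key α⟩
  rw [mexp] at hintm ⊢
  rw [integral_sum_measure hintm]
  simp_rw [integral_smul_measure, integral_monom_mconvPow, ← hs α]
  have hterm : ∀ k : ℕ,
      (ENNReal.ofReal (t ^ k / (Nat.factorial k))).toReal • (s α) ^ k
        = (t * s α) ^ k / (Nat.factorial k) := by
    intro k
    rw [ENNReal.toReal_ofReal (by positivity), smul_eq_mul]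
    ring
  rw [tsum_congr hterm, Real.exp_eq_exp_ℝ, NormedSpace.exp_eq_tsum_div]
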